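/- Let R be a finite commutative local ring of characteristic 2 with |R| = q^n (q even), J(R)^{n-1} ≠ 0, and R/J(R) a field of order q. Then for units s, v of R one has s^2 = v^2 if and only if s = v + j for some j ∈ J(R) with j^2 = 0; consequently, for every v in R^*, the set { s ∈ R^* : s^2 = v^2 } has exactly q^{⌊n/2⌋} elements. -/

import Mathlib

open IsLocalRing Submodule

lemma aux_count (q n : ℕ) (c d : ℕ → ℕ) (hq2 : 2 ≤ q)
    (hrec : ∀ i, c i = c (i+1) * d i)
    (hdq : ∀ i, ∃ e, d i = q ^ e)
    (hd2 : ∀ i, i < n → 2 ≤ d i)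
    (hc0 : c 0 = q ^ n) (hcpos : 0 < c n) :
    (∀ j, j ≤ n → c (n - j) = q ^ j) ∧ (∀ i, i < n → d i = q) := by
  choose e he using hdq
  have he1 : ∀ i, i < n → 1 ≤ e i := by
    intro i hi
    by_contra h
    have h0 : e i = 0 := by omega
    have := hd2 i hi
    rw [he i, h0, pow_zero] at this
    omega
  have htel : ∀ m, c 0 = c m * ∏ i ∈ Finset.range m, d i := by
    intro m
    induction m with
    | zero => simp
    | succ m ih =>
      rw [ih, hrec m, Finset.prod_range_succ]
      ring
  have htn : c 0 = c n * q ^ (∑ i ∈ Finset.range n, e i) := by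
    rw [htel n, Finset.prod_congr rfl (fun i _ => he i), Finset.prod_pow_eq_pow_sum]
  have hS : n ≤ ∑ i ∈ Finset.range n, e i := by
    calc n = ∑ i ∈ Finset.range n, 1 := by simp
    _ ≤ _ := Finset.sum_le_sum (fun i hi => he1 i (Finset.mem_range.mp hi))
  have hle : q ^ (∑ i ∈ Finset.range n, e i) ≤ q ^ n := by
    calc q ^ (∑ i ∈ Finset.range n, e i) ≤ c n * q ^ (∑ i ∈ Finset.range n, e i) :=
          Nat.le_mul_of_pos_left _ hcpos
    _ = q ^ n := by rw [← htn, hc0]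
  have hSeq : (∑ i ∈ Finset.range n, e i) = n :=
    le_antisymm ((Nat.pow_le_pow_iff_right (by omega)).mp hle) hS
  have hcn : c n = 1 := by
    rw [hSeq, hc0] at htn
    have : c n * q ^ n = 1 * q ^ n := by rw [one_mul, ← htn]
    exact Nat.eq_of_mul_eq_mul_right (by positivity) this
  have heq1 : ∀ i, i < n → e i = 1 := by
    intro i hi
    by_contra h
    have : ∑ j ∈ Finset.range n, (1:ℕ) < ∑ j ∈ Finset.range n, e j :=
      Finset.sum_lt_sum (fun j hj => he1 j (Finset.mem_range.mp hj))
        ⟨i, Finset.mem_range.mpr hi, by have := he1 i hi; omega⟩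
    simp only [Finset.sum_const, Finset.card_range, smul_eq_mul, mul_one] at this
    omega
  have hdval : ∀ i, i < n → d i = q := by
    intro i hi
    rw [he i, heq1 i hi, pow_one]
  refine ⟨?_, hdval⟩
  intro j
  induction j with
  | zero => intro _; simpa using hcn
  | succ j ih =>
    intro hj
    have h1 := hrec (n - (j+1))
    rw [show n - (j+1) + 1 = n - j by omega] at h1
    rw [h1, ih (by omega), hdval _ (by omega), pow_succ]

lemma aux_step {R : Type*} [CommRing R] [Fintype R] [IsLocalRing R] (i : ℕ) :
    Nat.card ↥((maximalIdeal R) ^ i) =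
      Nat.card ↥((maximalIdeal R) ^ (i+1)) *
      Nat.card ((↥((maximalIdeal R) ^ i)) ⧸
        (maximalIdeal R • ⊤ : Submodule R ↥((maximalIdeal R) ^ i))) := by
  have h1 := Submodule.card_eq_card_quotient_mul_card
    ((maximalIdeal R • ⊤ : Submodule R ↥((maximalIdeal R) ^ i)))
  have hmap : (maximalIdeal R • ⊤ : Submodule R ↥((maximalIdeal R) ^ i)).map
      ((maximalIdeal R) ^ i).subtype = (maximalIdeal R) ^ (i+1) := by
    rw [Submodule.map_smul'', Submodule.map_subtype_top, Ideal.smul_eq_mul, ← pow_succ']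
  have h2 : Nat.card ↥(maximalIdeal R • ⊤ : Submodule R ↥((maximalIdeal R) ^ i)) =
      Nat.card ↥((maximalIdeal R) ^ (i+1)) := by
    rw [← hmap]
    exact Nat.card_congr (Submodule.equivMapOfInjective _
      (Submodule.injective_subtype _) _).toEquiv
  rw [h1, h2]

lemma aux_main {R : Type*} [CommRing R] [Fintype R] [IsLocalRing R] (q n : ℕ) (hn : 0 < n)
    (hq2 : 2 ≤ q) (hcard : Fintype.card R = q ^ n)
    (hres : Nat.card (R ⧸ maximalIdeal R) = q)
    (hJ : (maximalIdeal R) ^ (n-1) ≠ ⊥) :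
    {x : R | x ^ 2 = 0}.ncard = q ^ (n / 2) := by
  classical
  set J := maximalIdeal R with hJdef
  letI : Field (R ⧸ J) := Ideal.Quotient.field J
  have hjac : J ≤ Ideal.jacobson ⊥ :=
    le_of_eq (IsLocalRing.jacobson_eq_maximalIdeal (R := R) ⊥ bot_ne_top).symm
  -- strictness of the chain
  have hstrict : ∀ i, i < n → J ^ (i+1) < J ^ i := by
    intro i hi
    refine lt_of_le_of_ne (Ideal.pow_le_pow_right (by omega)) ?_
    intro heq
    have hbot : J ^ i = ⊥ := by
      refine Submodule.eq_bot_of_le_smul_of_le_jacobson_bot J _ (IsNoetherian.noetherian _)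
        ?_ hjac
      rw [Ideal.smul_eq_mul, ← pow_succ', heq]
    exact hJ (eq_bot_iff.2 (le_trans (Ideal.pow_le_pow_right (by omega)) hbot.le))
  -- the quotient modules have q-power cardinality
  have hd : ∀ i, Nat.card ((↥(J ^ i)) ⧸ (J • ⊤ : Submodule R ↥(J ^ i))) =
      q ^ (Module.finrank (R ⧸ J) ((↥(J ^ i)) ⧸ (J • ⊤ : Submodule R ↥(J ^ i)))) := by
    intro i
    letI : Fintype ((↥(J ^ i)) ⧸ (J • ⊤ : Submodule R ↥(J ^ i))) := Fintype.ofFinite _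
    letI : Fintype (R ⧸ J) := Fintype.ofFinite _
    rw [Nat.card_eq_fintype_card, Module.card_eq_pow_finrank (K := R ⧸ J), ← Nat.card_eq_fintype_card,
      hres]
  have hnt : ∀ i, i < n → Nontrivial ((↥(J ^ i)) ⧸ (J • ⊤ : Submodule R ↥(J ^ i))) := by
    intro i hi
    have hlt : (J • ⊤ : Submodule R ↥(J ^ i)) < ⊤ := by
      refine lt_of_le_of_ne le_top ?_
      intro heq
      have := congrArg (Submodule.map (J ^ i).subtype) heq
      rw [Submodule.map_smul'', Submodule.map_subtype_top, Ideal.smul_eq_mul,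
        ← pow_succ'] at this
      exact (hstrict i hi).ne this
    exact Submodule.Quotient.nontrivial_iff.mpr hlt.ne
  have hd2 : ∀ i, i < n → 2 ≤ Nat.card ((↥(J ^ i)) ⧸ (J • ⊤ : Submodule R ↥(J ^ i))) := by
    intro i hi
    haveI := hnt i hi
    have h0 : Nat.card ((↥(J ^ i)) ⧸ (J • ⊤ : Submodule R ↥(J ^ i))) ≠ 0 :=
      Nat.card_ne_zero.mpr ⟨inferInstance, inferInstance⟩
    have h1 : Nat.card ((↥(J ^ i)) ⧸ (J • ⊤ : Submodule R ↥(J ^ i))) ≠ 1 := by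
      intro h
      exact not_subsingleton_iff_nontrivial.mpr (hnt i hi) (Nat.card_eq_one_iff_unique.mp h).1
    omega
  have hc0 : Nat.card ↥(J ^ (0:ℕ)) = q ^ n := by
    have h0 : (J ^ (0:ℕ) : Ideal R) = ⊤ := by rw [pow_zero, Ideal.one_eq_top]
    rw [h0, Nat.card_congr (Submodule.topEquiv (R := R) (M := R)).toEquiv,
      Nat.card_eq_fintype_card, hcard]
  obtain ⟨hcval, hdval⟩ := aux_count q n (fun i => Nat.card ↥(J ^ i))
    (fun i => Nat.card ((↥(J ^ i)) ⧸ (J • ⊤ : Submodule R ↥(J ^ i)))) hq2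
    (fun i => aux_step i) (fun i => ⟨_, hd i⟩) hd2 hc0 Nat.card_pos
  have hJn : (J ^ n : Ideal R) = ⊥ := by
    have h1 : Nat.card ↥(J ^ n) = 1 := by simpa using hcval 0 (by omega)
    haveI : Subsingleton ↥(J ^ n) := (Nat.card_eq_one_iff_unique.mp h1).1
    rw [eq_bot_iff]
    intro x hx
    have := Subsingleton.elim (⟨x, hx⟩ : ↥(J ^ n)) ⟨0, (J ^ n).zero_mem⟩
    rw [Ideal.mem_bot]
    exact congrArg Subtype.val this
  -- one-dimensionality of the graded pieces
  have hfin1 : ∀ k, k < n →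
      Module.finrank (R ⧸ J) ((↥(J ^ k)) ⧸ (J • ⊤ : Submodule R ↥(J ^ k))) = 1 := by
    intro k hk
    have h1 : q ^ (Module.finrank (R ⧸ J) ((↥(J ^ k)) ⧸ (J • ⊤ : Submodule R ↥(J ^ k))))
        = q ^ 1 := by
      rw [← hd k, hdval k hk, pow_one]
    exact Nat.pow_right_injective hq2 h1
  -- every element of J^k \ J^(k+1) generates J^k (for k < n)
  have hspan : ∀ k, k < n → ∀ x, ∀ hx : x ∈ J ^ k, x ∉ J ^ (k+1) →
      (J ^ k : Ideal R) ≤ Ideal.span {x} := by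
    intro k hk x hx hx'
    have hxM : (⟨x, hx⟩ : ↥(J ^ k)) ∉ (J • ⊤ : Submodule R ↥(J ^ k)) := by
      intro hmem
      apply hx'
      have h2 : x ∈ (J • ⊤ : Submodule R ↥(J ^ k)).map (J ^ k).subtype :=
        ⟨⟨x, hx⟩, hmem, rfl⟩
      rwa [Submodule.map_smul'', Submodule.map_subtype_top, Ideal.smul_eq_mul,
        ← pow_succ'] at h2
    have hxQ : (Submodule.Quotient.mk (⟨x, hx⟩ : ↥(J ^ k)) :
        (↥(J ^ k)) ⧸ (J • ⊤ : Submodule R ↥(J ^ k))) ≠ 0 := by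
      simpa [Submodule.Quotient.mk_eq_zero] using hxM
    have hspanQ : Submodule.span (R ⧸ J) {(Submodule.Quotient.mk (⟨x, hx⟩ : ↥(J ^ k)) :
        (↥(J ^ k)) ⧸ (J • ⊤ : Submodule R ↥(J ^ k)))} = ⊤ :=
      (finrank_eq_one_iff_of_nonzero _ hxQ).mp (hfin1 k hk)
    have hle : (J ^ k : Ideal R) ≤ Ideal.span {x} ⊔ J • (J ^ k : Ideal R) := by
      intro y hy
      have hyQ : (Submodule.Quotient.mk (⟨y, hy⟩ : ↥(J ^ k)) :
          (↥(J ^ k)) ⧸ (J • ⊤ : Submodule R ↥(J ^ k))) ∈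
          Submodule.span (R ⧸ J) {(Submodule.Quotient.mk (⟨x, hx⟩ : ↥(J ^ k)) :
          (↥(J ^ k)) ⧸ (J • ⊤ : Submodule R ↥(J ^ k)))} := by
        rw [hspanQ]; exact Submodule.mem_top
      obtain ⟨c, hc⟩ := Submodule.mem_span_singleton.mp hyQ
      obtain ⟨r, rfl⟩ := Ideal.Quotient.mk_surjective c
      rw [Module.Quotient.mk_smul_mk] at hc
      rw [Submodule.Quotient.eq] at hc
      have h2 : (J ^ k).subtype (r • (⟨x, hx⟩ : ↥(J ^ k)) - ⟨y, hy⟩) ∈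
          (J • ⊤ : Submodule R ↥(J ^ k)).map (J ^ k).subtype :=
        Submodule.mem_map_of_mem hc
      rw [Submodule.map_smul'', Submodule.map_subtype_top] at h2
      have h3 : r * x - y ∈ J • (J ^ k : Ideal R) := by simpa using h2
      have hy2 : y = r * x - (r * x - y) := by ring
      rw [hy2]
      refine Submodule.sub_mem _ (Submodule.mem_sup_left ?_) (Submodule.mem_sup_right h3)
      exact Ideal.mul_mem_left _ r (Ideal.subset_span rfl)
    exact Submodule.le_of_le_smul_of_le_jacobson_bot (IsNoetherian.noetherian _) hjac hle
  -- the set of square-zero elements is J ^ (n - n/2)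
  have hset : {x : R | x ^ 2 = 0} = ((J ^ (n - n / 2) : Ideal R) : Set R) := by
    ext x
    simp only [Set.mem_setOf_eq, SetLike.mem_coe]
    constructor
    · intro hx2
      by_cases hx0 : x = 0
      · rw [hx0]; exact Submodule.zero_mem _
      have hxn : x ∉ (J ^ n : Ideal R) := by
        rw [hJn, Ideal.mem_bot]; exact hx0
      have hex : ∃ t, x ∉ (J ^ t : Ideal R) := ⟨n, hxn⟩
      have ht : x ∉ (J ^ (Nat.find hex) : Ideal R) := Nat.find_spec hex
      have ht0 : Nat.find hex ≠ 0 := by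
        intro h
        apply ht
        rw [h, pow_zero, Ideal.one_eq_top]
        exact Submodule.mem_top
      have htn : Nat.find hex ≤ n := by
        by_contra h
        exact Nat.find_min hex (show n < Nat.find hex by omega) hxn
      set k := Nat.find hex - 1 with hkdef
      have hkx : x ∈ (J ^ k : Ideal R) := by
        by_contra h
        exact Nat.find_min hex (show k < Nat.find hex by omega) h
      have hk : k < n := by omega
      have hsp := hspan k hk x hkx (by
        rw [show k + 1 = Nat.find hex by omega]
        exact ht)
      have h2k : (J ^ (k + k) : Ideal R) = ⊥ := by
        rw [eq_bot_iff, pow_add]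
        calc (J ^ k : Ideal R) * J ^ k ≤ Ideal.span {x} * Ideal.span {x} :=
              Ideal.mul_mono hsp hsp
        _ = Ideal.span {x * x} := by rw [Ideal.span_singleton_mul_span_singleton]
        _ = ⊥ := by
              rw [← sq, hx2]
              simp
      have hge : n ≤ k + k := by
        by_contra h
        exact hJ (eq_bot_iff.2 (le_trans (Ideal.pow_le_pow_right (by omega)) h2k.le))
      exact Ideal.pow_le_pow_right (by omega) hkx
    · intro hx
      have h1 : x ^ 2 ∈ (J ^ (n - n / 2) : Ideal R) * J ^ (n - n / 2) := by
        rw [sq]; exact Ideal.mul_mem_mul hx hx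
      rw [← pow_add] at h1
      have h2 : (J ^ ((n - n / 2) + (n - n / 2)) : Ideal R) ≤ J ^ n :=
        Ideal.pow_le_pow_right (by omega)
      have h3 := h2 h1
      rw [hJn, Ideal.mem_bot] at h3
      exact h3
  rw [hset, ← Nat.card_coe_set_eq]
  have := hcval (n / 2) (by omega)
  rw [show n - n / 2 = n - n / 2 from rfl] at this
  convert this using 2
  exact SetLike.coe_sort_coe _

theorem sq_eq_sq_char_two {R : Type*} [CommRing R] [Fintype R] [IsLocalRing R]
    (q n : ℕ) (hn : 0 < n) (hq : Even q) (hchar : ringChar R = 2)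
    (hcard : Fintype.card R = q ^ n)
    (hres : Nat.card (R ⧸ (⊥ : Ideal R).jacobson) = q)
    (hJ : ((⊥ : Ideal R).jacobson) ^ (n - 1) ≠ ⊥) :
    (∀ s v : Rˣ, (s : R) ^ 2 = (v : R) ^ 2 ↔
      ∃ j ∈ (⊥ : Ideal R).jacobson, j ^ 2 = 0 ∧ (s : R) = (v : R) + j) ∧
    (∀ v : Rˣ, {s : Rˣ | (s : R) ^ 2 = (v : R) ^ 2}.ncard = q ^ (n / 2)) := by
  classical
  rw [IsLocalRing.jacobson_eq_maximalIdeal (R := R) ⊥ bot_ne_top] at hres hJ ⊢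
  have h2 : (2 : R) = 0 := by
    have h := CharP.cast_eq_zero R (ringChar R)
    rw [hchar] at h
    exact_mod_cast h
  have hq2 : 2 ≤ q := by
    have hpos : 0 < q := by
      rw [← hres]
      exact Nat.card_pos
    obtain ⟨k, hk⟩ := hq
    omega
  have hmem : ∀ x : R, x ^ 2 = 0 → x ∈ IsLocalRing.maximalIdeal R := by
    intro x hx
    rw [IsLocalRing.mem_maximalIdeal, mem_nonunits_iff]
    intro hu
    have := hu.pow 2
    rw [hx] at this
    exact not_isUnit_zero this
  constructor
  · intro s v
    constructor
    · intro hsv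
      refine ⟨(s : R) - v, ?_, ?_, by ring⟩
      · exact hmem _ (by linear_combination hsv + ((v : R) ^ 2 - (s : R) * v) * h2)
      · linear_combination hsv + ((v : R) ^ 2 - (s : R) * v) * h2
    · rintro ⟨j, hjJ, hj2, hs⟩
      linear_combination ((s : R) + v + j) * hs + hj2 + ((v : R) * j) * h2
  · intro v
    have hinj : Function.Injective (fun s : Rˣ => (s : R) - v) := by
      intro s t h
      exact Units.ext (by linear_combination h)
    have himg : (fun s : Rˣ => (s : R) - v) '' {s : Rˣ | (s : R) ^ 2 = (v : R) ^ 2} =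
        {x : R | x ^ 2 = 0} := by
      ext x
      constructor
      · rintro ⟨s, hs, rfl⟩
        simp only [Set.mem_setOf_eq] at hs ⊢
        linear_combination hs + ((v : R) ^ 2 - (s : R) * v) * h2
      · intro hx
        simp only [Set.mem_setOf_eq] at hx
        have hxJ : x ∈ IsLocalRing.maximalIdeal R := hmem x hx
        have hu : IsUnit ((v : R) + x) := by
          by_contra hnu
          have h1 : (v : R) + x ∈ IsLocalRing.maximalIdeal R := by
            rw [IsLocalRing.mem_maximalIdeal, mem_nonunits_iff]
            exact hnu
          have h2' : (v : R) ∈ IsLocalRing.maximalIdeal R := by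
            have : (v : R) = ((v : R) + x) - x := by ring
            rw [this]
            exact Submodule.sub_mem _ h1 hxJ
          rw [IsLocalRing.mem_maximalIdeal, mem_nonunits_iff] at h2'
          exact h2' v.isUnit
        obtain ⟨u, hu⟩ := hu
        refine ⟨u, ?_, by show (u : R) - v = x; rw [hu]; ring⟩
        simp only [Set.mem_setOf_eq]
        linear_combination ((u : R) + v + x) * hu + hx + ((v : R) * x) * h2
    calc {s : Rˣ | (s : R) ^ 2 = (v : R) ^ 2}.ncard
        = ((fun s : Rˣ => (s : R) - v) '' {s : Rˣ | (s : R) ^ 2 = (v : R) ^ 2}).ncard :=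
          (Set.ncard_image_of_injective _ hinj).symm
      _ = ({x : R | x ^ 2 = 0}).ncard := by rw [himg]
      _ = q ^ (n / 2) := aux_main q n hn hq2 hcard hres hJ
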